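/- Let V be a real inner product space, M a positive integer, x : Fin M → V, and z : Fin M → ℝ with ∑_i z i = 1. Let x̄ = ∑_i z i • x i be the weighted centroid and write θ i j = ‖x i − x j‖. Then ∑_i z i * ‖x i − x̄‖⁴ = ∑_i ∑_j ∑_k z i * z j * z k * (θ i j)² * (θ i k)² − (3/4) * (∑_i ∑_j z i * z j * (θ i j)²)². -/

import Mathlib

/-- The angularity `λ⁽⁴⁾` as an exact linear combination of energy flow polynomials:
`∑ᵢ zᵢ ‖xᵢ - x̄‖⁴ = ∑ᵢⱼₖ zᵢzⱼzₖ θᵢⱼ² θᵢₖ² - (3/4)(∑ᵢⱼ zᵢzⱼ θᵢⱼ²)²`. -/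
theorem angularity_four_efp
    {V : Type*} [NormedAddCommGroup V] [InnerProductSpace ℝ V]
    (M : ℕ) (hM : 0 < M) (x : Fin M → V) (z : Fin M → ℝ) (hz : ∑ i, z i = 1) :
    let xbar : V := ∑ i, z i • x i
    let θ : Fin M → Fin M → ℝ := fun i j => ‖x i - x j‖
    ∑ i, z i * ‖x i - xbar‖ ^ 4 =
      (∑ i, ∑ j, ∑ k, z i * z j * z k * θ i j ^ 2 * θ i k ^ 2) -
        (3 / 4) * (∑ i, ∑ j, z i * z j * θ i j ^ 2) ^ 2 := by
  intro xbar θ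
  set y : Fin M → V := fun i => x i - xbar with hy
  have hy0 : ∑ j, z j • y j = 0 := by
    simp only [hy, smul_sub, Finset.sum_sub_distrib]
    rw [← Finset.sum_smul, hz, one_smul, sub_self]
  set A : ℝ := ∑ i, z i * ‖y i‖ ^ 2 with hA
  have key : ∀ i, ∑ j, z j * θ i j ^ 2 = ‖y i‖ ^ 2 + A := by
    intro i
    have hθ : ∀ j, θ i j ^ 2
        = ‖y i‖ ^ 2 - 2 * inner ℝ (y i) (y j) + ‖y j‖ ^ 2 := by
      intro j
      have hxy : x i - x j = y i - y j := by simp [hy]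
      simp only [θ, hxy]
      exact norm_sub_sq_real (y i) (y j)
    have hsum : ∑ j, z j * inner ℝ (y i) (y j) = (0 : ℝ) := by
      have : (inner ℝ (y i) (∑ j, z j • y j) : ℝ) = ∑ j, z j * inner ℝ (y i) (y j) := by
        rw [inner_sum]
        exact Finset.sum_congr rfl fun j _ => real_inner_smul_right _ _ _
      rw [← this, hy0, inner_zero_right]
    calc ∑ j, z j * θ i j ^ 2
        = ∑ j, (z j * ‖y i‖ ^ 2 - 2 * (z j * inner ℝ (y i) (y j)) + z j * ‖y j‖ ^ 2) := by
          refine Finset.sum_congr rfl fun j _ => ?_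
          rw [hθ j]; ring
      _ = (∑ j, z j) * ‖y i‖ ^ 2 - 2 * (∑ j, z j * inner ℝ (y i) (y j)) + A := by
          rw [Finset.sum_add_distrib, Finset.sum_sub_distrib, Finset.sum_mul,
            ← Finset.mul_sum, hA]
      _ = ‖y i‖ ^ 2 + A := by rw [hz, hsum]; ring
  have tri : ∑ i, ∑ j, ∑ k, z i * z j * z k * θ i j ^ 2 * θ i k ^ 2
      = ∑ i, z i * (‖y i‖ ^ 2 + A) ^ 2 := by
    refine Finset.sum_congr rfl fun i _ => ?_
    rw [← key i, pow_two, Finset.sum_mul_sum, Finset.mul_sum]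
    refine Finset.sum_congr rfl fun j _ => ?_
    rw [Finset.mul_sum]
    exact Finset.sum_congr rfl fun k _ => by ring
  have dbl : ∑ i, ∑ j, z i * z j * θ i j ^ 2 = 2 * A := by
    have : ∑ i, ∑ j, z i * z j * θ i j ^ 2 = ∑ i, z i * (‖y i‖ ^ 2 + A) := by
      refine Finset.sum_congr rfl fun i _ => ?_
      rw [← key i, Finset.mul_sum]
      exact Finset.sum_congr rfl fun j _ => by ring
    rw [this]
    simp only [mul_add]
    rw [Finset.sum_add_distrib, ← Finset.sum_mul, hz]
    simp [hA]
    ring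
  rw [tri, dbl]
  have expand : ∑ i, z i * (‖y i‖ ^ 2 + A) ^ 2
      = (∑ i, z i * ‖y i‖ ^ 4) + 2 * A * (∑ i, z i * ‖y i‖ ^ 2) + A ^ 2 * (∑ i, z i) := by
    simp only [show ∀ i, z i * (‖y i‖ ^ 2 + A) ^ 2
        = z i * ‖y i‖ ^ 4 + 2 * A * (z i * ‖y i‖ ^ 2) + A ^ 2 * z i
      from fun i => by ring, Finset.sum_add_distrib, ← Finset.mul_sum]
  rw [expand, ← hA, hz]
  ring
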